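/- arXiv:1510.05491 — 7 statements merged into one kernel-verified Lean document; each statement's English description precedes it below -/
import Mathlib

section
/- Let I ⊆ ℝ be a nonempty open interval and let Ψ : I → ℝ be strictly convex and differentiable on I, and steep in the sense that for every sequence (θ_n) in I converging to a finite boundary point of I, |Ψ′(θ_n)| → ∞. Define the convex conjugate φ(t) = sup_{θ ∈ I} (t·θ − Ψ(θ)) and let C = {t ∈ ℝ : φ(t) < ∞}. Then C is a convex set containing Ω := Ψ′(I), φ is strictly convex on C, and φ is differentiable on Ω with φ′(Ψ′(θ)) = θ for every θ ∈ I. -/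
open Set Filter Topology

/-- One-dimensional core of the paper's Theorem 5: the conjugate of a steep,
strictly convex, differentiable log-partition function `Ψ` on a nonempty open
interval `I` is strictly convex on its effective domain `C`, which contains the
mean domain `Ω = Ψ' '' I`, and the conjugate `φ` is differentiable on `Ω` with
`φ'(Ψ'(θ)) = θ`. -/
theorem stmt_0 (I : Set ℝ) (hIopen : IsOpen I) (hIne : I.Nonempty)
    (hIconn : I.OrdConnected)
    (Ψ Ψ' : ℝ → ℝ)
    (hconv : StrictConvexOn ℝ I Ψ)
    (hderiv : ∀ θ ∈ I, HasDerivAt Ψ (Ψ' θ) θ)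
    (hsteep : ∀ x ∈ frontier I, ∀ u : ℕ → ℝ, (∀ n, u n ∈ I) →
      Tendsto u atTop (𝓝 x) → Tendsto (fun n => |Ψ' (u n)|) atTop atTop)
    (φ : ℝ → ℝ)
    (hφ : ∀ t, φ t = sSup ((fun θ => t * θ - Ψ θ) '' I))
    (C : Set ℝ)
    (hC : C = {t : ℝ | BddAbove ((fun θ => t * θ - Ψ θ) '' I)}) :
    Convex ℝ C ∧ Ψ' '' I ⊆ C ∧ StrictConvexOn ℝ C φ ∧
      ∀ θ ∈ I, HasDerivAt φ θ (Ψ' θ) := by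
  have ballmem : ∀ x y ε : ℝ, |y - x| < ε → y ∈ Metric.ball x ε := by
    intro x y ε h
    rwa [Metric.mem_ball, Real.dist_eq]
  -- strict gradient inequality
  have gradlt : ∀ x ∈ I, ∀ y ∈ I, x ≠ y → Ψ x + Ψ' x * (y - x) < Ψ y := by
    intro x hx y hy hne
    rcases hne.lt_or_gt with h | h
    · have := hconv.lt_slope_of_hasDerivAt hx hy h (hderiv x hx)
      rw [slope_def_field] at this
      have hyx : 0 < y - x := by linarith
      rw [lt_div_iff₀ hyx] at this
      linarith
    · have := hconv.slope_lt_of_hasDerivAt hy hx h (hderiv x hx)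
      rw [slope_def_field] at this
      have hyx : 0 < x - y := by linarith
      rw [div_lt_iff₀ hyx] at this
      nlinarith
  have grad : ∀ x ∈ I, ∀ y ∈ I, Ψ x + Ψ' x * (y - x) ≤ Ψ y := by
    intro x hx y hy
    by_cases hne : x = y
    · subst hne; simp
    · exact (gradlt x hx y hy hne).le
  have mono : StrictMonoOn Ψ' I := by
    intro x hx y hy hxy
    have h1 := gradlt x hx y hy hxy.ne
    have h2 := gradlt y hy x hx hxy.ne'
    nlinarith
  -- upper bound at a point of the mean domain
  have hub : ∀ θ₀ ∈ I, ∀ t, t = Ψ' θ₀ → ∀ θ ∈ I, t * θ - Ψ θ ≤ t * θ₀ - Ψ θ₀ := by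
    intro θ₀ h₀ t ht θ hθ
    have := grad θ₀ h₀ θ hθ
    rw [ht]; nlinarith
  have hne' : ∀ t : ℝ, ((fun θ => t * θ - Ψ θ) '' I).Nonempty := fun t => hIne.image _
  have hsub : Ψ' '' I ⊆ C := by
    rintro _ ⟨θ₀, h₀, rfl⟩
    rw [hC]
    refine ⟨Ψ' θ₀ * θ₀ - Ψ θ₀, ?_⟩
    rintro _ ⟨θ, hθ, rfl⟩
    exact hub θ₀ h₀ _ rfl θ hθ
  have hsupval : ∀ θ₀ ∈ I, ∀ t, t = Ψ' θ₀ → φ t = t * θ₀ - Ψ θ₀ := by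
    intro θ₀ h₀ t ht
    rw [hφ]
    refine le_antisymm (csSup_le (hne' t) ?_) (le_csSup ?_ ⟨θ₀, h₀, rfl⟩)
    · rintro _ ⟨θ, hθ, rfl⟩; exact hub θ₀ h₀ t ht θ hθ
    · exact ⟨t * θ₀ - Ψ θ₀, by rintro _ ⟨θ, hθ, rfl⟩; exact hub θ₀ h₀ t ht θ hθ⟩
  -- convexity of C
  have hCconv : Convex ℝ C := by
    rw [hC]
    rintro t₁ ⟨B₁, hB₁⟩ t₂ ⟨B₂, hB₂⟩ a b ha hb hab
    refine ⟨a * B₁ + b * B₂, ?_⟩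
    rintro _ ⟨θ, hθ, rfl⟩
    have h1 : t₁ * θ - Ψ θ ≤ B₁ := hB₁ ⟨θ, hθ, rfl⟩
    have h2 : t₂ * θ - Ψ θ ≤ B₂ := hB₂ ⟨θ, hθ, rfl⟩
    have h1' := mul_le_mul_of_nonneg_left h1 ha
    have h2' := mul_le_mul_of_nonneg_left h2 hb
    have hs : a * Ψ θ + b * Ψ θ = Ψ θ := by rw [← add_mul, hab, one_mul]
    have hexp : (a * t₁ + b * t₂) * θ - Ψ θ =
        a * (t₁ * θ - Ψ θ) + b * (t₂ * θ - Ψ θ) + (a * Ψ θ + b * Ψ θ - Ψ θ) := by ring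
    simp only [smul_eq_mul]
    rw [hexp, hs]
    linarith
  -- existence of a point where Ψ' ≥ t (given something in C to the right of t)
  have keyR : ∀ t t₂, t₂ ∈ C → t < t₂ → ∃ θp ∈ I, t ≤ Ψ' θp := by
    intro t t₂ ht₂ htt₂
    by_contra hcon
    push_neg at hcon
    obtain ⟨θ₀, h₀⟩ := id hIne
    rw [hC] at ht₂
    obtain ⟨B₂, hB₂⟩ := ht₂
    by_cases hbdd : BddAbove I
    · -- finite right endpoint: steepness gives a contradiction
      have hrI : sSup I ∉ I := by
        intro hrIn
        obtain ⟨ε, hε, hball⟩ := Metric.isOpen_iff.1 hIopen _ hrIn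
        have hmem : sSup I + ε / 2 ∈ I := hball (ballmem _ _ _ (by
          rw [show sSup I + ε / 2 - sSup I = ε / 2 by ring, abs_of_pos (by linarith)]
          linarith))
        have := le_csSup hbdd hmem
        linarith
      have hrf : sSup I ∈ frontier I := by
        rw [hIopen.frontier_eq]
        exact ⟨csSup_mem_closure hIne hbdd, hrI⟩
      have hseq : ∀ n : ℕ, ∃ x ∈ I, sSup I - 1 / (n + 1) < x := by
        intro n
        apply exists_lt_of_lt_csSup hIne
        have : (0:ℝ) < 1 / (n + 1) := by positivity
        linarith
      choose u hu hlt using hseq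
      have hule : ∀ n, u n ≤ sSup I := fun n => le_csSup hbdd (hu n)
      have hlow : Tendsto (fun n : ℕ => sSup I - 1 / (n + 1 : ℝ)) atTop (𝓝 (sSup I)) := by
        have h1 := tendsto_one_div_add_atTop_nhds_zero_nat (𝕜 := ℝ)
        have h2 := (tendsto_const_nhds :
          Tendsto (fun _ : ℕ => sSup I) atTop (𝓝 (sSup I))).sub h1
        simpa using h2
      have hutend : Tendsto u atTop (𝓝 (sSup I)) :=
        tendsto_of_tendsto_of_tendsto_of_le_of_le hlow tendsto_const_nhds
          (fun n => (hlt n).le) hule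
      have hT := hsteep _ hrf u hu hutend
      have hθ₀r : θ₀ < sSup I := by
        obtain ⟨ε, hε, hball⟩ := Metric.isOpen_iff.1 hIopen θ₀ h₀
        have hmem : θ₀ + ε / 2 ∈ I := hball (ballmem _ _ _ (by
          rw [show θ₀ + ε / 2 - θ₀ = ε / 2 by ring, abs_of_pos (by linarith)]
          linarith))
        have := le_csSup hbdd hmem
        linarith
      have hev1 : ∀ᶠ n in atTop, θ₀ < u n :=
        (hlow.eventually (eventually_gt_nhds hθ₀r)).mono fun n hn => hn.trans (hlt n)
      have hev2 : ∀ᶠ n in atTop, max |Ψ' θ₀| |t| < |Ψ' (u n)| :=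
        hT.eventually_gt_atTop _
      obtain ⟨n, hn1, hn2⟩ := (hev1.and hev2).exists
      have h1 : Ψ' θ₀ ≤ Ψ' (u n) := (mono h₀ (hu n) hn1).le
      have h2 : Ψ' (u n) < t := hcon _ (hu n)
      have : |Ψ' (u n)| ≤ max |Ψ' θ₀| |t| := by
        rw [abs_le]
        constructor
        · have h3 : -|Ψ' θ₀| ≤ Ψ' θ₀ := neg_abs_le _
          have h4 : |Ψ' θ₀| ≤ max |Ψ' θ₀| |t| := le_max_left _ _
          linarith
        · have h3 : t ≤ |t| := le_abs_self _
          have h4 : |t| ≤ max |Ψ' θ₀| |t| := le_max_right _ _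
          linarith
      linarith
    · -- I unbounded above: the supremand grows, contradicting boundedness at t₂
      have hg : ∀ θ ∈ I, θ₀ < θ → t * θ₀ - Ψ θ₀ ≤ t * θ - Ψ θ := by
        intro θ hθ hθθ
        have h1 := grad θ hθ θ₀ h₀
        have h2 := mul_le_mul_of_nonneg_right (hcon θ hθ).le
          (by linarith : (0:ℝ) ≤ θ - θ₀)
        nlinarith
      obtain ⟨θ, hθ, hθgt⟩ : ∃ θ ∈ I, max θ₀ ((B₂ - (t * θ₀ - Ψ θ₀)) / (t₂ - t)) < θ := by
        rcases not_bddAbove_iff.1 hbdd (max θ₀ ((B₂ - (t * θ₀ - Ψ θ₀)) / (t₂ - t))) with ⟨θ, hθ, h⟩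
        exact ⟨θ, hθ, h⟩
      have h1 : t * θ₀ - Ψ θ₀ ≤ t * θ - Ψ θ :=
        hg θ hθ (lt_of_le_of_lt (le_max_left _ _) hθgt)
      have h2 : t₂ * θ - Ψ θ ≤ B₂ := hB₂ ⟨θ, hθ, rfl⟩
      have h3 : (B₂ - (t * θ₀ - Ψ θ₀)) / (t₂ - t) < θ :=
        lt_of_le_of_lt (le_max_right _ _) hθgt
      rw [div_lt_iff₀ (by linarith : (0:ℝ) < t₂ - t)] at h3
      nlinarith
  -- symmetric: existence of a point where Ψ' ≤ t
  have keyL : ∀ t t₁, t₁ ∈ C → t₁ < t → ∃ θm ∈ I, Ψ' θm ≤ t := by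
    intro t t₁ ht₁ ht₁t
    by_contra hcon
    push_neg at hcon
    obtain ⟨θ₀, h₀⟩ := id hIne
    rw [hC] at ht₁
    obtain ⟨B₁, hB₁⟩ := ht₁
    by_cases hbdd : BddBelow I
    · have hlI : sInf I ∉ I := by
        intro hlIn
        obtain ⟨ε, hε, hball⟩ := Metric.isOpen_iff.1 hIopen _ hlIn
        have hmem : sInf I - ε / 2 ∈ I := hball (ballmem _ _ _ (by
          rw [show sInf I - ε / 2 - sInf I = -(ε / 2) by ring, abs_neg,
            abs_of_pos (by linarith)]
          linarith))
        have := csInf_le hbdd hmem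
        linarith
      have hlf : sInf I ∈ frontier I := by
        rw [hIopen.frontier_eq]
        exact ⟨csInf_mem_closure hIne hbdd, hlI⟩
      have hseq : ∀ n : ℕ, ∃ x ∈ I, x < sInf I + 1 / (n + 1) := by
        intro n
        apply exists_lt_of_csInf_lt hIne
        have : (0:ℝ) < 1 / (n + 1) := by positivity
        linarith
      choose u hu hlt using hseq
      have hule : ∀ n, sInf I ≤ u n := fun n => csInf_le hbdd (hu n)
      have hhigh : Tendsto (fun n : ℕ => sInf I + 1 / (n + 1 : ℝ)) atTop (𝓝 (sInf I)) := by
        have h1 := tendsto_one_div_add_atTop_nhds_zero_nat (𝕜 := ℝ)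
        have h2 := (tendsto_const_nhds :
          Tendsto (fun _ : ℕ => sInf I) atTop (𝓝 (sInf I))).add h1
        simpa using h2
      have hutend : Tendsto u atTop (𝓝 (sInf I)) :=
        tendsto_of_tendsto_of_tendsto_of_le_of_le tendsto_const_nhds hhigh
          hule (fun n => (hlt n).le)
      have hT := hsteep _ hlf u hu hutend
      have hθ₀l : sInf I < θ₀ := by
        obtain ⟨ε, hε, hball⟩ := Metric.isOpen_iff.1 hIopen θ₀ h₀
        have hmem : θ₀ - ε / 2 ∈ I := hball (ballmem _ _ _ (by
          rw [show θ₀ - ε / 2 - θ₀ = -(ε / 2) by ring, abs_neg, abs_of_pos (by linarith)]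
          linarith))
        have := csInf_le hbdd hmem
        linarith
      have hev1 : ∀ᶠ n in atTop, u n < θ₀ :=
        (hhigh.eventually (eventually_lt_nhds hθ₀l)).mono fun n hn => (hlt n).trans hn
      have hev2 : ∀ᶠ n in atTop, max |Ψ' θ₀| |t| < |Ψ' (u n)| :=
        hT.eventually_gt_atTop _
      obtain ⟨n, hn1, hn2⟩ := (hev1.and hev2).exists
      have h1 : Ψ' (u n) ≤ Ψ' θ₀ := (mono (hu n) h₀ hn1).le
      have h2 : t < Ψ' (u n) := hcon _ (hu n)
      have : |Ψ' (u n)| ≤ max |Ψ' θ₀| |t| := by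
        rw [abs_le]
        constructor
        · have h3 : -|t| ≤ t := neg_abs_le _
          have h4 : |t| ≤ max |Ψ' θ₀| |t| := le_max_right _ _
          linarith
        · have h3 : Ψ' θ₀ ≤ |Ψ' θ₀| := le_abs_self _
          have h4 : |Ψ' θ₀| ≤ max |Ψ' θ₀| |t| := le_max_left _ _
          linarith
      linarith
    · have hg : ∀ θ ∈ I, θ < θ₀ → t * θ₀ - Ψ θ₀ ≤ t * θ - Ψ θ := by
        intro θ hθ hθθ
        have h1 := grad θ hθ θ₀ h₀
        have h2 := mul_le_mul_of_nonneg_right (hcon θ hθ).le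
          (by linarith : (0:ℝ) ≤ θ₀ - θ)
        nlinarith
      obtain ⟨θ, hθ, hθlt⟩ : ∃ θ ∈ I, θ < min θ₀ ((B₁ - (t * θ₀ - Ψ θ₀)) / (t₁ - t)) := by
        rcases not_bddBelow_iff.1 hbdd (min θ₀ ((B₁ - (t * θ₀ - Ψ θ₀)) / (t₁ - t))) with ⟨θ, hθ, h⟩
        exact ⟨θ, hθ, h⟩
      have h1 : t * θ₀ - Ψ θ₀ ≤ t * θ - Ψ θ :=
        hg θ hθ (lt_of_lt_of_le hθlt (min_le_left _ _))
      have h2 : t₁ * θ - Ψ θ ≤ B₁ := hB₁ ⟨θ, hθ, rfl⟩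
      have h3 : θ < (B₁ - (t * θ₀ - Ψ θ₀)) / (t₁ - t) :=
        lt_of_lt_of_le hθlt (min_le_right _ _)
      rw [lt_div_iff_of_neg (by linarith : t₁ - t < 0)] at h3
      nlinarith
  -- existence of a point with Ψ' θ = t, for t strictly inside C
  have key : ∀ t t₁ t₂, t₁ ∈ C → t₂ ∈ C → t₁ < t → t < t₂ → ∃ θt ∈ I, Ψ' θt = t := by
    intro t t₁ t₂ ht₁ ht₂ h1 h2
    obtain ⟨θp, hθp, hp⟩ := keyR t t₂ ht₂ h2
    obtain ⟨θm, hθm, hm⟩ := keyL t t₁ ht₁ h1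
    have hmp : θm ≤ θp := by
      by_contra hcon
      push_neg at hcon
      have := mono hθp hθm hcon
      linarith
    have hIcc : Icc θm θp ⊆ I := hIconn.out hθm hθp
    have hcont : ContinuousOn (fun θ => t * θ - Ψ θ) (Icc θm θp) := by
      refine ContinuousOn.sub ?_ ?_
      · exact (continuous_const.mul continuous_id).continuousOn
      · exact fun θ hθ => ((hderiv θ (hIcc hθ)).continuousAt).continuousWithinAt
    obtain ⟨θt, hθtmem, hmax⟩ := isCompact_Icc.exists_isMaxOn (nonempty_Icc.2 hmp) hcont
    have hθtI : θt ∈ I := hIcc hθtmem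
    have hglobal : ∀ θ ∈ I, t * θ - Ψ θ ≤ t * θt - Ψ θt := by
      intro θ hθ
      rcases le_or_gt θ θm with hle | hgt
      · have hstep : t * θ - Ψ θ ≤ t * θm - Ψ θm := by
          have hgr := grad θm hθm θ hθ
          have hpr := mul_nonneg (by linarith : (0:ℝ) ≤ t - Ψ' θm)
            (by linarith : (0:ℝ) ≤ θm - θ)
          nlinarith
        exact hstep.trans (hmax (left_mem_Icc.2 hmp))
      · rcases le_or_gt θ θp with hle2 | hgt2
        · exact hmax ⟨hgt.le, hle2⟩
        · have hstep : t * θ - Ψ θ ≤ t * θp - Ψ θp := by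
            have hgr := grad θp hθp θ hθ
            have hpr := mul_nonneg (by linarith : (0:ℝ) ≤ Ψ' θp - t)
              (by linarith : (0:ℝ) ≤ θ - θp)
            nlinarith
          exact hstep.trans (hmax (right_mem_Icc.2 hmp))
    have hloc : IsLocalMax (fun θ => t * θ - Ψ θ) θt := by
      filter_upwards [hIopen.mem_nhds hθtI] with θ hθ
      exact hglobal θ hθ
    have hd : HasDerivAt (fun θ => t * θ - Ψ θ) (t - Ψ' θt) θt := by
      exact (((hasDerivAt_id' θt).const_mul t).sub (hderiv θt hθtI)).congr_deriv (by ring)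
    have := hloc.hasDerivAt_eq_zero hd
    exact ⟨θt, hθtI, by linarith⟩
  -- strict convexity of φ on C
  have hstrict : StrictConvexOn ℝ C φ := by
    refine ⟨hCconv, ?_⟩
    have main : ∀ t₁ ∈ C, ∀ t₂ ∈ C, t₁ < t₂ → ∀ a b : ℝ, 0 < a → 0 < b → a + b = 1 →
        φ (a * t₁ + b * t₂) < a * φ t₁ + b * φ t₂ := by
      intro t₁ ht₁ t₂ ht₂ h12 a b ha hb hab
      set t := a * t₁ + b * t₂ with htdef
      have hID1 : t - t₁ = b * (t₂ - t₁) := by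
        rw [htdef]; linear_combination t₁ * hab
      have hID2 : t₂ - t = a * (t₂ - t₁) := by
        rw [htdef]; linear_combination (-t₂) * hab
      have htl : t₁ < t := by
        have := mul_pos hb (sub_pos.2 h12); linarith
      have htr : t < t₂ := by
        have := mul_pos ha (sub_pos.2 h12); linarith
      obtain ⟨θt, hθtI, hΨ't⟩ := key t t₁ t₂ ht₁ ht₂ htl htr
      have hφt : φ t = t * θt - Ψ θt := hsupval θt hθtI t hΨ't.symm
      have hb₁ : BddAbove ((fun θ => t₁ * θ - Ψ θ) '' I) := by rw [hC] at ht₁; exact ht₁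
      have hb₂ : BddAbove ((fun θ => t₂ * θ - Ψ θ) '' I) := by rw [hC] at ht₂; exact ht₂
      have hle₁ : t₁ * θt - Ψ θt ≤ φ t₁ := by
        rw [hφ]; exact le_csSup hb₁ ⟨θt, hθtI, rfl⟩
      have hle₂ : t₂ * θt - Ψ θt ≤ φ t₂ := by
        rw [hφ]; exact le_csSup hb₂ ⟨θt, hθtI, rfl⟩
      have hlt₁ : t₁ * θt - Ψ θt < φ t₁ := by
        rcases hle₁.lt_or_eq with h | h
        · exact h
        · exfalso
          have hub₁ : ∀ θ ∈ I, t₁ * θ - Ψ θ ≤ t₁ * θt - Ψ θt := by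
            intro θ hθ
            rw [h, hφ]
            exact le_csSup hb₁ ⟨θ, hθ, rfl⟩
          have hloc : IsLocalMax (fun θ => t₁ * θ - Ψ θ) θt := by
            filter_upwards [hIopen.mem_nhds hθtI] with θ hθ
            exact hub₁ θ hθ
          have hd : HasDerivAt (fun θ => t₁ * θ - Ψ θ) (t₁ - Ψ' θt) θt := by
            exact (((hasDerivAt_id' θt).const_mul t₁).sub (hderiv θt hθtI)).congr_deriv (by ring)
          have := hloc.hasDerivAt_eq_zero hd
          have : t₁ = t := by rw [← hΨ't]; linarith
          linarith
      have hcomb : t * θt - Ψ θt = a * (t₁ * θt - Ψ θt) + b * (t₂ * θt - Ψ θt) := by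
        rw [htdef]; linear_combination (Ψ θt) * hab
      have h1' := mul_lt_mul_of_pos_left hlt₁ ha
      have h2' := mul_le_mul_of_nonneg_left hle₂ hb.le
      rw [hφt, hcomb]
      linarith
    intro x hx y hy hxy a b ha hb hab
    simp only [smul_eq_mul]
    rcases hxy.lt_or_gt with h | h
    · exact main x hx y hy h a b ha hb hab
    · have hmain := main y hy x hx h b a hb ha (by linarith)
      have hcomm : a * x + b * y = b * y + a * x := by ring
      rw [hcomm]
      linarith
  refine ⟨hCconv, hsub, hstrict, ?_⟩
  -- differentiability of φ on the mean domain
  intro θ₀ h₀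
  set t₀ := Ψ' θ₀ with ht₀
  rw [hasDerivAt_iff_isLittleO, Asymptotics.isLittleO_iff]
  intro c hc
  obtain ⟨δ, hδ, hball⟩ := Metric.isOpen_iff.1 hIopen θ₀ h₀
  set d := min (δ / 2) c with hd
  have hdpos : 0 < d := lt_min (by linarith) hc
  have hdδ : d < δ := lt_of_le_of_lt (min_le_left _ _) (by linarith)
  have hdc : d ≤ c := min_le_right _ _
  have hmI : θ₀ - d ∈ I := hball (ballmem _ _ _ (by
    rw [show θ₀ - d - θ₀ = -d by ring, abs_neg, abs_of_pos hdpos]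
    exact hdδ))
  have hpI : θ₀ + d ∈ I := hball (ballmem _ _ _ (by
    rw [show θ₀ + d - θ₀ = d by ring, abs_of_pos hdpos]
    exact hdδ))
  have hlt1 : Ψ' (θ₀ - d) < t₀ := mono hmI h₀ (by linarith)
  have hlt2 : t₀ < Ψ' (θ₀ + d) := mono h₀ hpI (by linarith)
  have hφt₀ : φ t₀ = t₀ * θ₀ - Ψ θ₀ := hsupval θ₀ h₀ t₀ rfl
  -- the key two-sided bound
  have hbound : ∀ t, Ψ' (θ₀ - d) ≤ t → t ≤ Ψ' (θ₀ + d) →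
      ∀ θ ∈ I, t * θ - Ψ θ ≤ φ t₀ + (t - t₀) * θ₀ + |t - t₀| * d := by
    intro t htm htp θ hθ
    have hcase : ∀ θ' ∈ Icc (θ₀ - d) (θ₀ + d),
        t * θ' - Ψ θ' ≤ φ t₀ + (t - t₀) * θ₀ + |t - t₀| * d := by
      intro θ' hθ'
      have hθ'I : θ' ∈ I := hIconn.out hmI hpI hθ'
      have h1 : t₀ * θ' - Ψ θ' ≤ φ t₀ := by
        rw [hφt₀]
        exact hub θ₀ h₀ t₀ rfl θ' hθ'I
      have h2 : (t - t₀) * (θ' - θ₀) ≤ |t - t₀| * d := by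
        calc (t - t₀) * (θ' - θ₀) ≤ |(t - t₀) * (θ' - θ₀)| := le_abs_self _
          _ = |t - t₀| * |θ' - θ₀| := abs_mul _ _
          _ ≤ |t - t₀| * d := by
              apply mul_le_mul_of_nonneg_left _ (abs_nonneg _)
              rw [abs_le]
              exact ⟨by linarith [hθ'.1], by linarith [hθ'.2]⟩
      have h3 : t * θ' = t₀ * θ' + (t - t₀) * θ₀ + (t - t₀) * (θ' - θ₀) := by ring
      linarith
    rcases le_or_gt θ (θ₀ - d) with hle | hgt
    · have hred : t * θ - Ψ θ ≤ t * (θ₀ - d) - Ψ (θ₀ - d) := by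
        have hgr := grad (θ₀ - d) hmI θ hθ
        have hpr := mul_nonneg (by linarith : (0:ℝ) ≤ t - Ψ' (θ₀ - d))
          (by linarith : (0:ℝ) ≤ (θ₀ - d) - θ)
        nlinarith
      exact hred.trans (hcase _ (left_mem_Icc.2 (by linarith)))
    · rcases le_or_gt θ (θ₀ + d) with hle2 | hgt2
      · exact hcase θ ⟨hgt.le, hle2⟩
      · have hred : t * θ - Ψ θ ≤ t * (θ₀ + d) - Ψ (θ₀ + d) := by
          have hgr := grad (θ₀ + d) hpI θ hθ
          have hpr := mul_nonneg (by linarith : (0:ℝ) ≤ Ψ' (θ₀ + d) - t)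
            (by linarith : (0:ℝ) ≤ θ - (θ₀ + d))
          nlinarith
        exact hred.trans (hcase _ (right_mem_Icc.2 (by linarith)))
  filter_upwards [Ioo_mem_nhds hlt1 hlt2] with t ht
  have hup : φ t ≤ φ t₀ + (t - t₀) * θ₀ + |t - t₀| * d := by
    rw [hφ]
    apply csSup_le (hne' t)
    rintro _ ⟨θ, hθ, rfl⟩
    exact hbound t ht.1.le ht.2.le θ hθ
  have hlo : φ t₀ + (t - t₀) * θ₀ ≤ φ t := by
    have hbdd : BddAbove ((fun θ => t * θ - Ψ θ) '' I) := by
      refine ⟨φ t₀ + (t - t₀) * θ₀ + |t - t₀| * d, ?_⟩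
      rintro _ ⟨θ, hθ, rfl⟩
      exact hbound t ht.1.le ht.2.le θ hθ
    have hmem : t * θ₀ - Ψ θ₀ ≤ φ t := by
      rw [hφ]; exact le_csSup hbdd ⟨θ₀, h₀, rfl⟩
    have : φ t₀ + (t - t₀) * θ₀ = t * θ₀ - Ψ θ₀ := by rw [hφt₀]; ring
    linarith
  have habs : |φ t - φ t₀ - (t - t₀) * θ₀| ≤ |t - t₀| * d := by
    rw [abs_le]
    constructor
    · have : (0:ℝ) ≤ |t - t₀| * d := mul_nonneg (abs_nonneg _) hdpos.le
      linarith
    · linarith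
  simp only [smul_eq_mul, Real.norm_eq_abs]
  calc |φ t - φ t₀ - (t - t₀) * θ₀| ≤ |t - t₀| * d := habs
    _ ≤ |t - t₀| * c := mul_le_mul_of_nonneg_left hdc (abs_nonneg _)
    _ = c * |t - t₀| := mul_comm _ _
end

section
/- Let C ⊆ ℝ be an interval with nonempty interior Ω = int(C), and let φ : C → ℝ be strictly convex on C and differentiable on Ω. Define the Bregman divergence d_φ(x,y) = φ(x) − φ(y) − (x−y)·φ′(y) for x ∈ C, y ∈ Ω. Let x_1, …, x_N ∈ C with sample mean x̄ = (1/N)·Σ_{i=1}^N x_i, and assume x̄ ∈ Ω. Then the function μ ↦ Σ_{i=1}^N d_φ(x_i, μ) on Ω attains a minimum at μ = x̄, and this minimizer is unique: for every μ ∈ Ω with μ ≠ x̄, Σ_i d_φ(x_i, μ) > Σ_i d_φ(x_i, x̄). -/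
open Set Filter Topology

/-- ML part of the paper's Theorem 6: for a Bregman divergence `d_φ` generated by a
strictly convex `φ` on an interval `C`, differentiable on the interior `Ω`, the total
divergence `μ ↦ Σᵢ d_φ(xᵢ, μ)` over `Ω` is uniquely minimized at the sample mean `x̄`
whenever `x̄ ∈ Ω`. -/
theorem stmt_1 (C : Set ℝ) (hC : C.OrdConnected)
    (Ω : Set ℝ) (hΩ : Ω = interior C) (hΩne : Ω.Nonempty)
    (φ φ' : ℝ → ℝ)
    (hconv : StrictConvexOn ℝ C φ)
    (hderiv : ∀ y ∈ Ω, HasDerivAt φ (φ' y) y)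
    (d : ℝ → ℝ → ℝ)
    (hd : ∀ x y, d x y = φ x - φ y - (x - y) * φ' y)
    (N : ℕ) (hN : 0 < N)
    (x : Fin N → ℝ) (hx : ∀ i, x i ∈ C)
    (xbar : ℝ) (hxbar : xbar = (∑ i, x i) / N) (hxbarΩ : xbar ∈ Ω) :
    (∀ μ ∈ Ω, ∑ i, d (x i) xbar ≤ ∑ i, d (x i) μ) ∧
    (∀ μ ∈ Ω, μ ≠ xbar → ∑ i, d (x i) xbar < ∑ i, d (x i) μ) := by
  have hΩC : Ω ⊆ C := hΩ ▸ interior_subset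
  have hNne : (N : ℝ) ≠ 0 := Nat.cast_ne_zero.mpr hN.ne'
  have hsum : ∑ i, x i = (N : ℝ) * xbar := by
    rw [hxbar]; field_simp
  -- the key identity
  have hkey : ∀ μ : ℝ, ∑ i, d (x i) μ - ∑ i, d (x i) xbar
      = (N : ℝ) * (φ xbar - φ μ - (xbar - μ) * φ' μ) := by
    intro μ
    have e : ∀ ν : ℝ, ∑ i, d (x i) ν
        = (∑ i, φ (x i)) - N * φ ν - ((N : ℝ) * xbar - N * ν) * φ' ν := by
      intro ν
      simp only [hd, Finset.sum_sub_distrib, ← Finset.sum_mul, Finset.sum_const,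
        Finset.card_univ, Fintype.card_fin, nsmul_eq_mul, hsum]
    rw [e μ, e xbar]; ring
  -- positivity of the Bregman divergence
  have hpos : ∀ μ ∈ Ω, μ ≠ xbar → 0 < φ xbar - φ μ - (xbar - μ) * φ' μ := by
    intro μ hμ hne
    have hμC : μ ∈ C := hΩC hμ
    have hxbarC : xbar ∈ C := hΩC hxbarΩ
    rcases lt_or_gt_of_ne hne with h | h
    · -- μ < xbar
      have hs : φ' μ < (φ xbar - φ μ) / (xbar - μ) := by
        simpa [slope_def_field] using
          hconv.lt_slope_of_hasDerivAt hμC hxbarC h (hderiv μ hμ)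
      nlinarith [(lt_div_iff₀ (by linarith : (0:ℝ) < xbar - μ)).mp hs]
    · -- xbar < μ
      have hs := hconv.slope_lt_of_hasDerivAt hxbarC hμC h (hderiv μ hμ)
      have hs' : (φ μ - φ xbar) / (μ - xbar) < φ' μ := by
        simpa [slope_def_field] using hs
      nlinarith [(div_lt_iff₀ (by linarith : (0:ℝ) < μ - xbar)).mp hs']
  constructor
  · intro μ hμ
    by_cases hne : μ = xbar
    · subst hne; exact le_refl _
    · have := hpos μ hμ hne
      have hk := hkey μ
      nlinarith [(by exact_mod_cast hN : (0:ℝ) < N)]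
  · intro μ hμ hne
    have := hpos μ hμ hne
    have hk := hkey μ
    nlinarith [(by exact_mod_cast hN : (0:ℝ) < N)]
end

section
/- Define f : ℝ² → ℝ on the set D = {(x₁,x₂) : x₁ > 0, x₂ ≥ 0} ∪ {(0,0)} by f(x₁,x₂) = x₂²/(2x₁) − 2·√x₂ for x₁ > 0 and f(0,0) = 0. Then: (i) f is convex on D; (ii) f is strictly convex on the open positive quadrant {(x₁,x₂) : x₁ > 0, x₂ > 0}; (iii) f is not strictly convex on D, since f(x₁, 0) = 0 for every x₁ > 0, so f is constant on a nontrivial segment of D. -/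
open Set Filter Topology

private lemma pos_comb {a b t s : ℝ} (ha : 0 < a) (hb : 0 < b) (ht : 0 ≤ t)
    (hs : 0 ≤ s) (hts : t + s = 1) : 0 < t * a + s * b := by
  rcases eq_or_lt_of_le ht with rfl | ht'
  · have hs1 : s = 1 := by linarith
    subst hs1; simpa using hb
  · have h1 : 0 ≤ s * b := mul_nonneg hs hb.le
    nlinarith [mul_pos ht' ha]

private lemma sqrt_comb {y z t s : ℝ} (hy : 0 ≤ y) (hz : 0 ≤ z) (ht : 0 ≤ t)
    (hs : 0 ≤ s) (hts : t + s = 1) :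
    t * Real.sqrt y + s * Real.sqrt z ≤ Real.sqrt (t * y + s * z) := by
  have hsum : 0 ≤ t * y + s * z := by positivity
  rw [Real.le_sqrt (by positivity) hsum]
  have h1 := Real.sq_sqrt hy
  have h2 := Real.sq_sqrt hz
  have e1 : t * Real.sqrt y ^ 2 = t * y := by rw [h1]
  have e2 : t * Real.sqrt z ^ 2 = t * z := by rw [h2]
  have e3 : s * Real.sqrt y ^ 2 = s * y := by rw [h1]
  have e4 : s * Real.sqrt z ^ 2 = s * z := by rw [h2]
  nlinarith [mul_nonneg (mul_nonneg ht hs) (sq_nonneg (Real.sqrt y - Real.sqrt z)),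
    e1, e2, e3, e4]

private lemma sqrt_comb_strict {y z t s : ℝ} (hy : 0 ≤ y) (hz : 0 ≤ z) (ht : 0 < t)
    (hs : 0 < s) (hts : t + s = 1) (hne : y ≠ z) :
    t * Real.sqrt y + s * Real.sqrt z < Real.sqrt (t * y + s * z) := by
  have hsum : 0 ≤ t * y + s * z := by positivity
  have hsq : (t * Real.sqrt y + s * Real.sqrt z) ^ 2 < t * y + s * z := by
    have h1 := Real.sq_sqrt hy
    have h2 := Real.sq_sqrt hz
    have hne' : Real.sqrt y ≠ Real.sqrt z := fun h => hne (by rw [← h1, ← h2, h])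
    have hp : 0 < (Real.sqrt y - Real.sqrt z) ^ 2 :=
      lt_of_le_of_ne (sq_nonneg _) (Ne.symm (pow_ne_zero 2 (sub_ne_zero.mpr hne')))
    have e1 : t * Real.sqrt y ^ 2 = t * y := by rw [h1]
    have e2 : t * Real.sqrt z ^ 2 = t * z := by rw [h2]
    have e3 : s * Real.sqrt y ^ 2 = s * y := by rw [h1]
    have e4 : s * Real.sqrt z ^ 2 = s * z := by rw [h2]
    nlinarith [mul_pos (mul_pos ht hs) hp, e1, e2, e3, e4]
  apply lt_of_pow_lt_pow_left₀ 2 (Real.sqrt_nonneg (t * y + s * z))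
  rw [Real.sq_sqrt hsum]
  exact hsq

private lemma quad_comb {a b y z t s : ℝ} (ha : 0 < a) (hb : 0 < b) (ht : 0 ≤ t)
    (hs : 0 ≤ s) (hts : t + s = 1) :
    (t * y + s * z) ^ 2 / (2 * (t * a + s * b)) ≤
      t * (y ^ 2 / (2 * a)) + s * (z ^ 2 / (2 * b)) := by
  have hab : 0 < t * a + s * b := pos_comb ha hb ht hs hts
  have hrhs : t * (y ^ 2 / (2 * a)) + s * (z ^ 2 / (2 * b))
      = (t * y ^ 2 * b + s * z ^ 2 * a) / (2 * a * b) := by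
    field_simp
  rw [hrhs, div_le_div_iff₀ (by positivity) (by positivity)]
  nlinarith [mul_nonneg (mul_nonneg ht hs) (sq_nonneg (b * y - a * z))]

private lemma quad_comb_strict {a b y z t s : ℝ} (ha : 0 < a) (hb : 0 < b) (ht : 0 < t)
    (hs : 0 < s) (hts : t + s = 1) (hne : b * y ≠ a * z) :
    (t * y + s * z) ^ 2 / (2 * (t * a + s * b)) <
      t * (y ^ 2 / (2 * a)) + s * (z ^ 2 / (2 * b)) := by
  have hab : 0 < t * a + s * b := pos_comb ha hb ht.le hs.le hts
  have hrhs : t * (y ^ 2 / (2 * a)) + s * (z ^ 2 / (2 * b))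
      = (t * y ^ 2 * b + s * z ^ 2 * a) / (2 * a * b) := by
    field_simp
  rw [hrhs, div_lt_div_iff₀ (by positivity) (by positivity)]
  have hp : 0 < (b * y - a * z) ^ 2 :=
    lt_of_le_of_ne (sq_nonneg _) (Ne.symm (pow_ne_zero 2 (sub_ne_zero.mpr hne)))
  nlinarith [mul_pos ht hs]

/-- The paper's Example 1: `f(x₁,x₂) = x₂²/(2x₁) − 2√x₂` on
`D = {x₁ > 0, x₂ ≥ 0} ∪ {(0,0)}` (with `f(0,0) = 0`) is convex on `D`, strictly
convex on the open positive quadrant, but not strictly convex on `D`, since it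
vanishes on the ray `{(x₁, 0) : x₁ > 0}`. -/
theorem stmt_3 (D : Set (ℝ × ℝ))
    (hD : D = {p : ℝ × ℝ | 0 < p.1 ∧ 0 ≤ p.2} ∪ {((0 : ℝ), (0 : ℝ))})
    (f : ℝ × ℝ → ℝ)
    (hf : ∀ p : ℝ × ℝ, 0 < p.1 → 0 ≤ p.2 →
      f p = p.2 ^ 2 / (2 * p.1) - 2 * Real.sqrt p.2)
    (hf0 : f (0, 0) = 0) :
    ConvexOn ℝ D f ∧
    StrictConvexOn ℝ {p : ℝ × ℝ | 0 < p.1 ∧ 0 < p.2} f ∧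
    ¬ StrictConvexOn ℝ D f ∧
    (∀ x₁ : ℝ, 0 < x₁ → f (x₁, 0) = 0) := by
  subst hD
  have hzero : ∀ x₁ : ℝ, 0 < x₁ → f (x₁, 0) = 0 := by
    intro x hx
    rw [hf (x, 0) hx le_rfl]
    simp
  have hf0' : f 0 = 0 := hf0
  -- D is convex
  have hDconv : Convex ℝ ({p : ℝ × ℝ | 0 < p.1 ∧ 0 ≤ p.2} ∪ {((0 : ℝ), (0 : ℝ))}) := by
    rintro p (⟨hp1, hp2⟩ | hp) q (⟨hq1, hq2⟩ | hq) t s ht hs hts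
    · left
      refine ⟨?_, ?_⟩
      · simp only [Prod.fst_add, Prod.smul_fst, smul_eq_mul]
        rcases eq_or_lt_of_le ht with rfl | ht'
        · have : s = 1 := by linarith
          subst this; simpa using hq1
        · nlinarith
      · simp only [Prod.snd_add, Prod.smul_snd, smul_eq_mul]
        positivity
    · simp only [Set.mem_singleton_iff] at hq; subst hq
      rcases eq_or_lt_of_le ht with rfl | ht'
      · right; simp
      · left
        refine ⟨?_, ?_⟩
        · simp only [Prod.fst_add, Prod.smul_fst, smul_eq_mul]
          have : (0:ℝ×ℝ).1 = 0 := rfl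
          simp only [Prod.fst_zero] at *
          nlinarith
        · simp only [Prod.snd_add, Prod.smul_snd, smul_eq_mul]
          nlinarith [mul_nonneg ht hp2]
    · simp only [Set.mem_singleton_iff] at hp; subst hp
      rcases eq_or_lt_of_le hs with rfl | hs'
      · right; simp [show t = 1 from by linarith]
      · left
        refine ⟨?_, ?_⟩
        · simp only [Prod.fst_add, Prod.smul_fst, smul_eq_mul]
          nlinarith
        · simp only [Prod.snd_add, Prod.smul_snd, smul_eq_mul]
          nlinarith [mul_nonneg hs hq2]
    · simp only [Set.mem_singleton_iff] at hp hq; subst hp; subst hq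
      right; simp
  -- main convexity inequality, interior case
  have hkey : ∀ (a b y z t s : ℝ), 0 < a → 0 < b → 0 ≤ y → 0 ≤ z → 0 ≤ t → 0 ≤ s →
      t + s = 1 → f (t * a + s * b, t * y + s * z) ≤
        t * f (a, y) + s * f (b, z) := by
    intro a b y z t s ha hb hy hz ht hs hts
    have hab : 0 < t * a + s * b := pos_comb ha hb ht hs hts
    have hyz : 0 ≤ t * y + s * z := by positivity
    rw [hf _ hab hyz, hf _ ha hy, hf _ hb hz]
    simp only
    have h1 := quad_comb (y := y) (z := z) ha hb ht hs hts
    have h2 := sqrt_comb hy hz ht hs hts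
    nlinarith
  -- strict versions
  have hkeyS : ∀ (a b y z t s : ℝ), 0 < a → 0 < b → 0 < y → 0 < z → 0 < t → 0 < s →
      t + s = 1 → (a, y) ≠ (b, z) → f (t * a + s * b, t * y + s * z) <
        t * f (a, y) + s * f (b, z) := by
    intro a b y z t s ha hb hy hz ht hs hts hne
    have hab : 0 < t * a + s * b := pos_comb ha hb ht.le hs.le hts
    have hyz : 0 ≤ t * y + s * z := by positivity
    rw [hf _ hab hyz, hf _ ha hy.le, hf _ hb hz.le]
    simp only
    by_cases hyzne : y = z
    · subst hyzne
      have hane : a ≠ b := by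
        intro h; exact hne (by rw [h])
      have h1 := quad_comb_strict (y := y) (z := y) ha hb ht hs hts
        (fun h => hane (mul_right_cancel₀ (ne_of_gt hy) h).symm)
      have h2 := sqrt_comb hy.le hy.le ht.le hs.le hts
      nlinarith
    · have h1 := quad_comb (y := y) (z := z) ha hb ht.le hs.le hts
      have h2 := sqrt_comb_strict hy.le hz.le ht hs hts hyzne
      nlinarith
  -- origin-endpoint case
  have hkey0 : ∀ (b z s : ℝ), 0 < b → 0 ≤ z → 0 < s → s ≤ 1 →
      f (s * b, s * z) ≤ s * f (b, z) := by
    intro b z s hb hz hs hs1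
    have hsb : 0 < s * b := by positivity
    have hsz : 0 ≤ s * z := by positivity
    rw [hf _ hsb hsz, hf _ hb hz]
    simp only
    have e1 : (s * z) ^ 2 / (2 * (s * b)) = s * (z ^ 2 / (2 * b)) := by
      field_simp
    have e2 : Real.sqrt (s * z) = Real.sqrt s * Real.sqrt z := Real.sqrt_mul hs.le z
    have hss : s ≤ Real.sqrt s := by
      have h1 : Real.sqrt s ≤ 1 := Real.sqrt_le_one.mpr hs1
      nlinarith [Real.sq_sqrt hs.le, Real.sqrt_nonneg s]
    have hz' : 0 ≤ Real.sqrt z := Real.sqrt_nonneg z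
    rw [e1, e2]
    nlinarith [mul_nonneg (sub_nonneg.mpr hss) hz']
  refine ⟨⟨hDconv, ?_⟩, ⟨?_, ?_⟩, ?_, hzero⟩
  · -- ConvexOn inequality
    rintro p hp q hq t s ht hs hts
    rcases eq_or_lt_of_le ht with rfl | ht'
    · have : s = 1 := by linarith
      subst this; simp
    rcases eq_or_lt_of_le hs with rfl | hs'
    · have : t = 1 := by linarith
      subst this; simp
    have hcombo : t • p + s • q = (t * p.1 + s * q.1, t * p.2 + s * q.2) := by
      simp [Prod.ext_iff, Prod.smul_fst, Prod.smul_snd, smul_eq_mul]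
    rw [hcombo]
    rcases hp with ⟨hp1, hp2⟩ | hp
    · rcases hq with ⟨hq1, hq2⟩ | hq
      · have := hkey p.1 q.1 p.2 q.2 t s hp1 hq1 hp2 hq2 ht hs hts
        simpa using this
      · simp only [Set.mem_singleton_iff] at hq; subst hq
        have := hkey0 p.1 p.2 t hp1 hp2 ht' (by linarith)
        simpa [hf0, hf0'] using this
    · simp only [Set.mem_singleton_iff] at hp; subst hp
      rcases hq with ⟨hq1, hq2⟩ | hq
      · have := hkey0 q.1 q.2 s hq1 hq2 hs' (by linarith)
        simpa [hf0, hf0'] using this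
      · simp only [Set.mem_singleton_iff] at hq; subst hq
        simp [hf0, hf0']
  · -- Convex of the open quadrant
    exact (convex_Ioi (0:ℝ)).prod (convex_Ioi (0:ℝ))
  · -- strict convexity inequality
    rintro p ⟨hp1, hp2⟩ q ⟨hq1, hq2⟩ hne t s ht hs hts
    have hcombo : t • p + s • q = (t * p.1 + s * q.1, t * p.2 + s * q.2) := by
      simp [Prod.ext_iff, Prod.smul_fst, Prod.smul_snd, smul_eq_mul]
    rw [hcombo]
    have := hkeyS p.1 q.1 p.2 q.2 t s hp1 hq1 hp2 hq2 ht hs hts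
      (by simpa [Prod.ext_iff] using hne)
    simpa using this
  · -- not strictly convex on D
    intro h
    have h1 : ((1:ℝ), (0:ℝ)) ∈ ({p : ℝ × ℝ | 0 < p.1 ∧ 0 ≤ p.2} ∪ {((0 : ℝ), (0 : ℝ))}) :=
      Or.inl ⟨one_pos, le_rfl⟩
    have h2 : ((2:ℝ), (0:ℝ)) ∈ ({p : ℝ × ℝ | 0 < p.1 ∧ 0 ≤ p.2} ∪ {((0 : ℝ), (0 : ℝ))}) :=
      Or.inl ⟨two_pos, le_rfl⟩
    have hne : ((1:ℝ), (0:ℝ)) ≠ ((2:ℝ), (0:ℝ)) := by norm_num [Prod.ext_iff]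
    have := h.2 h1 h2 hne (by norm_num : (0:ℝ) < 1/2) (by norm_num : (0:ℝ) < 1/2)
      (by norm_num)
    have hc : (1/2 : ℝ) • ((1:ℝ), (0:ℝ)) + (1/2 : ℝ) • ((2:ℝ), (0:ℝ))
        = ((3/2 : ℝ), (0:ℝ)) := by
      simp [Prod.ext_iff, smul_eq_mul]; norm_num
    rw [hc, hzero 1 one_pos, hzero 2 two_pos, hzero (3/2) (by norm_num)] at this
    norm_num at this
end

section
/- Fix α > 0. For every t > 0, sup_{θ < −log α} (t·θ + (1/α)·log(1 − α·e^θ)) = t·log t − ((α·t + 1)/α)·log(α·t + 1). -/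
open Set Filter Topology

/-- The convex conjugate of the non-negative discrete EDM log-partition function
`Ψ(θ) = −(1/α) log(1 − α e^θ)` on `Θ = (−∞, −log α)` at `t > 0` is
`φ(t) = t log t − ((αt+1)/α) log(αt+1)`. -/
theorem stmt_9 (α : ℝ) (hα : 0 < α) (t : ℝ) (ht : 0 < t) :
    sSup ((fun θ : ℝ => t * θ + (1 / α) * Real.log (1 - α * Real.exp θ)) ''
        Set.Iio (-Real.log α))
      = t * Real.log t - ((α * t + 1) / α) * Real.log (α * t + 1) := by
  have hαt : 0 < α * t + 1 := by positivity
  set θs := Real.log (t / (α * t + 1)) with hθs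
  have hx : Real.exp θs = t / (α * t + 1) := Real.exp_log (by positivity)
  have hmem : θs ∈ Set.Iio (-Real.log α) := by
    simp only [Set.mem_Iio]
    rw [hθs, ← Real.log_inv]
    apply Real.log_lt_log (by positivity)
    rw [div_lt_iff₀ hαt, inv_mul_eq_div, lt_div_iff₀ hα]
    nlinarith
  have hval : t * θs + (1 / α) * Real.log (1 - α * Real.exp θs)
      = t * Real.log t - ((α * t + 1) / α) * Real.log (α * t + 1) := by
    rw [hx]
    have h1 : 1 - α * (t / (α * t + 1)) = (α * t + 1)⁻¹ := by
      field_simp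
      ring
    rw [h1, Real.log_inv, hθs, Real.log_div (ne_of_gt ht) (ne_of_gt hαt)]
    field_simp
    ring
  apply IsGreatest.csSup_eq
  constructor
  · exact ⟨θs, hmem, hval⟩
  · rintro y ⟨θ, hθ, rfl⟩
    dsimp only
    rw [← hval]
    set x := Real.exp θ with hxdef
    have hx0 : 0 < x := Real.exp_pos θ
    have hx1 : α * x < 1 := by
      have : x < Real.exp (-Real.log α) := Real.exp_lt_exp.mpr hθ
      rw [Real.exp_neg, Real.exp_log hα] at this
      calc α * x < α * α⁻¹ := by exact mul_lt_mul_of_pos_left this hα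
        _ = 1 := mul_inv_cancel₀ (ne_of_gt hα)
    have hlog1 : Real.log (x * (α * t + 1) / t) ≤ x * (α * t + 1) / t - 1 :=
      Real.log_le_sub_one_of_pos (by positivity)
    have hlog2 : Real.log ((1 - α * x) * (α * t + 1)) ≤ (1 - α * x) * (α * t + 1) - 1 :=
      Real.log_le_sub_one_of_pos (by nlinarith)
    have e1 : Real.log (x * (α * t + 1) / t) = Real.log x - θs := by
      rw [hθs, Real.log_div (by positivity) (ne_of_gt ht),
        Real.log_div (ne_of_gt ht) (ne_of_gt hαt),
        Real.log_mul (ne_of_gt hx0) (ne_of_gt hαt)]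
      ring
    have e2 : Real.log ((1 - α * x) * (α * t + 1))
        = Real.log (1 - α * x) - Real.log (1 - α * (t / (α * t + 1))) := by
      have h1 : 1 - α * (t / (α * t + 1)) = (α * t + 1)⁻¹ := by field_simp; ring
      rw [h1, Real.log_inv,
        Real.log_mul (by nlinarith) (ne_of_gt hαt)]
      ring
    have hsum : t * (x * (α * t + 1) / t - 1) + (1 / α) * ((1 - α * x) * (α * t + 1) - 1) = 0 := by
      field_simp
      ring
    have hθeq : θ = Real.log x := (Real.log_exp θ).symm
    rw [e1] at hlog1
    rw [e2] at hlog2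
    have m1 := mul_le_mul_of_nonneg_left hlog1 (le_of_lt ht)
    have m2 := mul_le_mul_of_nonneg_left hlog2 (le_of_lt (by positivity : (0:ℝ) < 1/α))
    rw [hx]
    nlinarith [m1, m2, hsum]
end

section
/- Fix α > 0. For every t ∈ ℝ, sup over θ ∈ (−π/(2√α), π/(2√α)) of (t·θ + (1/α)·log(cos(√α·θ))) equals (t/√α)·arctan(√α·t) − (1/(2α))·log(1 + α·t²), and the supremum is attained at θ = arctan(√α·t)/√α. -/
open Set Filter Topology

/-- The convex conjugate of the real-continuous EDM log-partition function
`Ψ(θ) = −(1/α) log(cos(√α θ))`: for every `t`, the supremum over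
`Θ = (−π/(2√α), π/(2√α))` of `tθ + (1/α) log(cos(√α θ))` equals
`(t/√α) arctan(√α t) − (1/(2α)) log(1 + αt²)`, attained at
`θ = arctan(√α t)/√α`. -/
theorem stmt_13 (α : ℝ) (hα : 0 < α) (t : ℝ)
    (f : ℝ → ℝ)
    (hf : ∀ θ, f θ = t * θ + (1 / α) * Real.log (Real.cos (Real.sqrt α * θ)))
    (Θ : Set ℝ)
    (hΘ : Θ = Set.Ioo (-(Real.pi / (2 * Real.sqrt α))) (Real.pi / (2 * Real.sqrt α))) :
    IsGreatest (f '' Θ)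
      ((t / Real.sqrt α) * Real.arctan (Real.sqrt α * t)
        - (1 / (2 * α)) * Real.log (1 + α * t ^ 2)) ∧
    f (Real.arctan (Real.sqrt α * t) / Real.sqrt α)
      = (t / Real.sqrt α) * Real.arctan (Real.sqrt α * t)
        - (1 / (2 * α)) * Real.log (1 + α * t ^ 2) := by
  have hfe : f = fun θ => t * θ + (1 / α) * Real.log (Real.cos (Real.sqrt α * θ)) :=
    funext hf
  subst hfe hΘ
  set s := Real.sqrt α with hsdef
  have hs0 : 0 < s := Real.sqrt_pos.mpr hα
  have hs2 : s ^ 2 = α := Real.sq_sqrt hα.le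
  set θs := Real.arctan (s * t) / s with hθsdef
  set b := Real.pi / (2 * s) with hbdef
  have hb : b = (Real.pi / 2) / s := by rw [hbdef, div_div]
  have hmem : θs ∈ Set.Ioo (-b) b := by
    constructor
    · rw [hb, ← neg_div, hθsdef, div_lt_div_iff_of_pos_right hs0]
      exact Real.neg_pi_div_two_lt_arctan _
    · rw [hb, hθsdef, div_lt_div_iff_of_pos_right hs0]
      exact Real.arctan_lt_pi_div_two _
  -- the angle s*θ lies in (-π/2, π/2)
  have hang : ∀ θ ∈ Set.Ioo (-b) b, s * θ ∈ Set.Ioo (-(Real.pi / 2)) (Real.pi / 2) := by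
    intro θ hθ
    rw [hb] at hθ
    constructor
    · have := hθ.1
      rw [← neg_div, div_lt_iff₀ hs0] at this
      nlinarith
    · have := hθ.2
      rw [lt_div_iff₀ hs0] at this
      nlinarith
  have hcos : ∀ θ ∈ Set.Ioo (-b) b, 0 < Real.cos (s * θ) := fun θ hθ =>
    Real.cos_pos_of_mem_Ioo (hang θ hθ)
  -- value at the maximizer
  have hsθs : s * θs = Real.arctan (s * t) := by
    rw [hθsdef, mul_div_cancel₀ _ hs0.ne']
  have hval : t * θs + (1 / α) * Real.log (Real.cos (s * θs))
      = (t / s) * Real.arctan (s * t) - (1 / (2 * α)) * Real.log (1 + α * t ^ 2) := by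
    rw [hsθs, Real.cos_arctan, one_div (Real.sqrt (1 + (s * t) ^ 2)), Real.log_inv,
      Real.log_sqrt (by positivity)]
    have h1 : (s * t) ^ 2 = α * t ^ 2 := by rw [mul_pow, hs2]
    rw [h1, hθsdef]
    field_simp
    ring
  -- derivative
  have hd : ∀ θ ∈ Set.Ioo (-b) b,
      HasDerivAt (fun θ => t * θ + (1 / α) * Real.log (Real.cos (s * θ)))
        (t - Real.tan (s * θ) / s) θ := by
    intro θ hθ
    have hc : Real.cos (s * θ) ≠ 0 := (hcos θ hθ).ne'
    have h1 : HasDerivAt (fun θ : ℝ => s * θ) s θ := by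
      simpa using (hasDerivAt_id θ).const_mul s
    have h2 : HasDerivAt (fun θ : ℝ => Real.cos (s * θ)) (-Real.sin (s * θ) * s) θ :=
      (Real.hasDerivAt_cos (s * θ)).comp θ h1
    have h3 : HasDerivAt (fun θ : ℝ => Real.log (Real.cos (s * θ)))
        ((Real.cos (s * θ))⁻¹ * (-Real.sin (s * θ) * s)) θ :=
      (h2.log hc).congr_deriv (div_eq_inv_mul _ _)
    have h4 := ((hasDerivAt_id θ).const_mul t).add (h3.const_mul (1 / α))
    refine h4.congr_deriv ?_
    rw [Real.tan_eq_sin_div_cos, ← hs2]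
    field_simp
    ring
  have hcont : ContinuousOn (fun θ => t * θ + (1 / α) * Real.log (Real.cos (s * θ)))
      (Set.Ioo (-b) b) := fun θ hθ => (hd θ hθ).continuousAt.continuousWithinAt
  -- key inequality
  have key : ∀ θ ∈ Set.Ioo (-b) b,
      (fun θ => t * θ + (1 / α) * Real.log (Real.cos (s * θ))) θ
        ≤ t * θs + (1 / α) * Real.log (Real.cos (s * θs)) := by
    intro θ hθ
    set F := fun θ => t * θ + (1 / α) * Real.log (Real.cos (s * θ)) with hF
    rcases lt_trichotomy θ θs with h | h | h
    · have hsub : Set.Icc θ θs ⊆ Set.Ioo (-b) b := Set.ordConnected_Ioo.out hθ hmem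
      have hmono : StrictMonoOn F (Set.Icc θ θs) := by
        apply strictMonoOn_of_deriv_pos (convex_Icc _ _) (hcont.mono hsub)
        intro x hx
        rw [interior_Icc] at hx
        have hx' : x ∈ Set.Ioo (-b) b := hsub (Set.Ioo_subset_Icc_self hx)
        rw [(hd x hx').deriv]
        have htan : Real.tan (s * x) < s * t := by
          have h1 : s * x < s * θs := by
            exact (mul_lt_mul_iff_right₀ hs0).mpr hx.2
          have := Real.tan_lt_tan_of_lt_of_lt_pi_div_two (hang x hx').1
            ((hang θs hmem).2) h1
          rwa [hsθs, Real.tan_arctan] at this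
        rw [sub_pos, div_lt_iff₀ hs0]
        linarith
      exact (hmono (Set.left_mem_Icc.mpr h.le) (Set.right_mem_Icc.mpr h.le) h).le
    · rw [h]
    · have hsub : Set.Icc θs θ ⊆ Set.Ioo (-b) b := Set.ordConnected_Ioo.out hmem hθ
      have hmono : StrictAntiOn F (Set.Icc θs θ) := by
        apply strictAntiOn_of_deriv_neg (convex_Icc _ _) (hcont.mono hsub)
        intro x hx
        rw [interior_Icc] at hx
        have hx' : x ∈ Set.Ioo (-b) b := hsub (Set.Ioo_subset_Icc_self hx)
        rw [(hd x hx').deriv]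
        have htan : s * t < Real.tan (s * x) := by
          have h1 : s * θs < s * x := (mul_lt_mul_iff_right₀ hs0).mpr hx.1
          have := Real.tan_lt_tan_of_lt_of_lt_pi_div_two (hang θs hmem).1
            ((hang x hx').2) h1
          rwa [hsθs, Real.tan_arctan] at this
        rw [sub_neg, lt_div_iff₀ hs0]
        linarith
      exact (hmono (Set.left_mem_Icc.mpr h.le) (Set.right_mem_Icc.mpr h.le) h).le
  refine ⟨⟨⟨θs, hmem, hval⟩, ?_⟩, hval⟩
  rintro y ⟨θ, hθ, rfl⟩
  rw [← hval]
  exact key θ hθ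
end

section
/- Fix α > 0. For all x, y ∈ ℝ define d(x,y) = (1/(2α))·(2√α·x·(arctan(√α·x) − arctan(√α·y)) + log((1 + α·y²)/(1 + α·x²))). Then d(x,y) equals the Bregman divergence φ(x) − φ(y) − (x−y)·φ′(y) of the function φ(t) = (t/√α)·arctan(√α·t) − (1/(2α))·log(1 + α·t²); moreover d(x,y) ≥ 0 with equality if and only if x = y. -/
open Set Filter Topology

/-- The parametrized Bregman divergence for real continuous data:
`d(x,y) = (1/(2α))(2√α x (arctan(√α x) − arctan(√α y)) + log((1+αy²)/(1+αx²)))`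
equals the Bregman divergence of `φ(t) = (t/√α) arctan(√α t) − (1/(2α)) log(1+αt²)`,
is nonnegative, and vanishes iff `x = y`. -/
theorem stmt_14 (α : ℝ) (hα : 0 < α)
    (φ : ℝ → ℝ)
    (hφ : ∀ t, φ t = (t / Real.sqrt α) * Real.arctan (Real.sqrt α * t)
      - (1 / (2 * α)) * Real.log (1 + α * t ^ 2))
    (d : ℝ → ℝ → ℝ)
    (hd : ∀ x y, d x y = (1 / (2 * α)) *
      (2 * Real.sqrt α * x * (Real.arctan (Real.sqrt α * x) - Real.arctan (Real.sqrt α * y))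
        + Real.log ((1 + α * y ^ 2) / (1 + α * x ^ 2))))
    (x y : ℝ) :
    d x y = φ x - φ y - (x - y) * deriv φ y ∧
    0 ≤ d x y ∧ (d x y = 0 ↔ x = y) := by
  set s := Real.sqrt α with hs_def
  have hs : 0 < s := Real.sqrt_pos.mpr hα
  have hs2 : s * s = α := Real.mul_self_sqrt hα.le
  set g : ℝ → ℝ := fun t => Real.arctan (s * t) / s with hg_def
  have hpos : ∀ t : ℝ, 0 < 1 + α * t ^ 2 := by
    intro t
    have : 0 ≤ α * t ^ 2 := mul_nonneg hα.le (sq_nonneg t)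
    linarith
  -- derivative of φ
  have hφeq : φ = fun t => (t / s) * Real.arctan (s * t)
      - (1 / (2 * α)) * Real.log (1 + α * t ^ 2) := funext hφ
  have hderiv : ∀ t : ℝ, HasDerivAt φ (g t) t := by
    intro t
    have h1 : HasDerivAt (fun u : ℝ => Real.arctan (s * u)) (s / (1 + α * t ^ 2)) t := by
      have := (Real.hasDerivAt_arctan (s * t)).comp t ((hasDerivAt_id t).const_mul s)
      refine this.congr_deriv ?_
      have : (s * t) ^ 2 = α * t ^ 2 := by rw [mul_pow, ← hs2]; ring
      rw [this]; field_simp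
    have h2 : HasDerivAt (fun u : ℝ => u / s) (1 / s) t := by
      simpa using (hasDerivAt_id t).div_const s
    have h3 : HasDerivAt (fun u : ℝ => 1 + α * u ^ 2) (2 * α * t) t := by
      have := ((hasDerivAt_pow 2 t).const_mul α).const_add 1
      exact this.congr_deriv (by ring)
    have h4 : HasDerivAt (fun u : ℝ => Real.log (1 + α * u ^ 2))
        ((2 * α * t) / (1 + α * t ^ 2)) t := by
      have := (Real.hasDerivAt_log (hpos t).ne').comp t h3
      exact this.congr_deriv (by field_simp)
    have h5 := ((h2.mul h1).sub (h4.const_mul (1 / (2 * α))))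
    rw [hφeq]
    refine h5.congr_deriv ?_
    have h6 : (1 + α * t ^ 2) ≠ 0 := (hpos t).ne'
    rw [hg_def]
    field_simp [hg_def]
    ring
  have hderiv' : deriv φ y = g y := (hderiv y).deriv
  -- equality of d with Bregman divergence
  have hB : d x y = φ x - φ y - (x - y) * g y := by
    rw [hd, hφ, hφ, hg_def]
    rw [Real.log_div (hpos y).ne' (hpos x).ne']
    field_simp
    ring_nf
    rw [show s ^ 2 = α by rw [sq, hs2]]
    ring
  have hgmono : StrictMono g := by
    intro a b hab
    have : Real.arctan (s * a) < Real.arctan (s * b) :=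
      Real.arctan_strictMono (by nlinarith)
    exact div_lt_div_of_pos_right this hs
  -- positivity via MVT
  have hcont : ContinuousOn φ (Icc (min x y) (max x y)) :=
    (continuous_iff_continuousAt.mpr fun t => (hderiv t).continuousAt).continuousOn
  have key : x ≠ y → 0 < d x y := by
    intro hxy
    rw [hB]
    rcases lt_or_gt_of_ne hxy with h | h
    · obtain ⟨c, hc, hgc⟩ := exists_hasDerivAt_eq_slope φ g h
        ((continuous_iff_continuousAt.mpr fun t => (hderiv t).continuousAt).continuousOn)
        (fun t _ => hderiv t)
      have h1 : φ y - φ x = g c * (y - x) :=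
        (div_eq_iff (sub_ne_zero.mpr h.ne')).mp hgc.symm
      have h2 : g c < g y := hgmono hc.2
      nlinarith
    · obtain ⟨c, hc, hgc⟩ := exists_hasDerivAt_eq_slope φ g h
        ((continuous_iff_continuousAt.mpr fun t => (hderiv t).continuousAt).continuousOn)
        (fun t _ => hderiv t)
      have h1 : φ x - φ y = g c * (x - y) :=
        (div_eq_iff (sub_ne_zero.mpr h.ne')).mp hgc.symm
      have h2 : g y < g c := hgmono hc.1
      nlinarith
  have hzero : d x x = 0 := by
    rw [hd]
    simp [div_self (hpos x).ne']
  refine ⟨by rw [hB, hderiv'], ?_, ?_⟩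
  · rcases eq_or_ne x y with rfl | h
    · exact hzero.ge
    · exact (key h).le
  · constructor
    · intro h0
      by_contra h
      exact (key h).ne' h0
    · rintro rfl; exact hzero
end

section
/- Fix x, y > 0 and let d(x, y | α) = (x^α + (α−1)·y^α − α·x·y^{α−1})/(α·(α−1)) for α ∉ {0,1}. Then: (i) d(x, y | α) → x·(log x − log y) + (y − x) as α → 1 (α ≠ 0, 1); and (ii) d(x, y | α) → x/y − log(x/y) − 1 as α → 0 (α ≠ 0, 1). -/
open Set Filter Topology

lemma tweedie_N_deriv (x y : ℝ) (hx : 0 < x) (hy : 0 < y) (c : ℝ) :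
    HasDerivAt (fun α : ℝ => x ^ α + (α - 1) * y ^ α - α * x * y ^ (α - 1))
      (x ^ c * Real.log x + ((y ^ c) + (c - 1) * (y ^ c * Real.log y)) -
        (x * y ^ (c - 1) + c * x * (y ^ (c - 1) * Real.log y))) c := by
  have h1 : HasDerivAt (fun α : ℝ => x ^ α) (x ^ c * Real.log x) c :=
    (Real.hasStrictDerivAt_const_rpow hx c).hasDerivAt
  have h2 : HasDerivAt (fun α : ℝ => y ^ α) (y ^ c * Real.log y) c :=
    (Real.hasStrictDerivAt_const_rpow hy c).hasDerivAt
  have h3 : HasDerivAt (fun α : ℝ => y ^ (α - 1)) (y ^ (c - 1) * Real.log y) c := by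
    have hc : HasDerivAt (fun α : ℝ => α - 1) 1 c := (hasDerivAt_id c).sub_const 1
    have := ((Real.hasStrictDerivAt_const_rpow hy (c - 1)).hasDerivAt).comp c hc
    simpa [Function.comp_def] using this
  have hA : HasDerivAt (fun α : ℝ => (α - 1) * y ^ α)
      (1 * y ^ c + (c - 1) * (y ^ c * Real.log y)) c :=
    ((hasDerivAt_id c).sub_const 1).mul h2
  have hB : HasDerivAt (fun α : ℝ => α * x * y ^ (α - 1))
      ((1 * x) * y ^ (c - 1) + (c * x) * (y ^ (c - 1) * Real.log y)) c :=
    (((hasDerivAt_id c).mul_const x)).mul h3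
  have := (h1.add hA).sub hB
  convert this using 1
  · rfl
  · rfl
  · rfl
  · ring

/-- Continuity of the Tweedie divergence in `α`: as `α → 1` (through values
`∉ {0,1}`) the divergence tends to the generalized KL divergence
`x(log x − log y) + (y − x)`, and as `α → 0` it tends to the Itakura–Saito
divergence `x/y − log(x/y) − 1`. -/
theorem stmt_17 (x y : ℝ) (hx : 0 < x) (hy : 0 < y) :
    Tendsto (fun α : ℝ =>
        (x ^ α + (α - 1) * y ^ α - α * x * y ^ (α - 1)) / (α * (α - 1)))
      (𝓝[{α : ℝ | α ≠ 0 ∧ α ≠ 1}] 1)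
      (𝓝 (x * (Real.log x - Real.log y) + (y - x))) ∧
    Tendsto (fun α : ℝ =>
        (x ^ α + (α - 1) * y ^ α - α * x * y ^ (α - 1)) / (α * (α - 1)))
      (𝓝[{α : ℝ | α ≠ 0 ∧ α ≠ 1}] 0)
      (𝓝 (x / y - Real.log (x / y) - 1)) := by
  set N : ℝ → ℝ := fun α => x ^ α + (α - 1) * y ^ α - α * x * y ^ (α - 1) with hNdef
  have hN1 : N 1 = 0 := by simp [hNdef]
  have hN0 : N 0 = 0 := by
    simp [hNdef, Real.rpow_neg_one, hy.ne']
  have hS1 : {α : ℝ | α ≠ 0 ∧ α ≠ 1} ⊆ {(1 : ℝ)}ᶜ := fun a ha => ha.2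
  have hS0 : {α : ℝ | α ≠ 0 ∧ α ≠ 1} ⊆ {(0 : ℝ)}ᶜ := fun a ha => ha.1
  constructor
  · -- α → 1
    have hd : HasDerivAt N (x * (Real.log x - Real.log y) + (y - x)) 1 := by
      have := tweedie_N_deriv x y hx hy 1
      convert this using 1
      simp [Real.rpow_one]
      ring
    have hslope : Tendsto (slope N 1) (𝓝[≠] 1)
        (𝓝 (x * (Real.log x - Real.log y) + (y - x))) :=
      hasDerivAt_iff_tendsto_slope.mp hd
    have hslope' : Tendsto (slope N 1) (𝓝[{α : ℝ | α ≠ 0 ∧ α ≠ 1}] 1)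
        (𝓝 (x * (Real.log x - Real.log y) + (y - x))) :=
      hslope.mono_left (nhdsWithin_mono _ hS1)
    have hinv : Tendsto (fun α : ℝ => α⁻¹) (𝓝[{α : ℝ | α ≠ 0 ∧ α ≠ 1}] 1) (𝓝 (1 : ℝ)⁻¹) :=
      ((continuousAt_inv₀ one_ne_zero).tendsto).mono_left nhdsWithin_le_nhds
    have hmul := hslope'.mul hinv
    have heq : ∀ α : ℝ, slope N 1 α * α⁻¹ = N α / (α * (α - 1)) := by
      intro α
      rw [slope_def_field, hN1, sub_zero, mul_comm α (α - 1), ← div_div, div_eq_mul_inv, div_eq_mul_inv]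
    rw [show (x * (Real.log x - Real.log y) + (y - x)) =
        (x * (Real.log x - Real.log y) + (y - x)) * (1 : ℝ)⁻¹ by ring]
    exact hmul.congr heq
  · -- α → 0
    have hd : HasDerivAt N (-(x / y - Real.log (x / y) - 1)) 0 := by
      have := tweedie_N_deriv x y hx hy 0
      convert this using 1
      rw [Real.log_div hx.ne' hy.ne']
      simp [Real.rpow_neg_one, hx.ne', hy.ne', mul_comm]
      field_simp
      ring
    have hslope : Tendsto (slope N 0) (𝓝[≠] 0)
        (𝓝 (-(x / y - Real.log (x / y) - 1))) :=
      hasDerivAt_iff_tendsto_slope.mp hd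
    have hslope' : Tendsto (slope N 0) (𝓝[{α : ℝ | α ≠ 0 ∧ α ≠ 1}] 0)
        (𝓝 (-(x / y - Real.log (x / y) - 1))) :=
      hslope.mono_left (nhdsWithin_mono _ hS0)
    have hinv : Tendsto (fun α : ℝ => (α - 1)⁻¹) (𝓝[{α : ℝ | α ≠ 0 ∧ α ≠ 1}] 0)
        (𝓝 ((0 : ℝ) - 1)⁻¹) := by
      have : ContinuousAt (fun α : ℝ => (α - 1)⁻¹) 0 := by
        have h : ((0:ℝ) - 1) ≠ 0 := by norm_num
        exact (continuousAt_id.sub continuousAt_const).inv₀ h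
      exact this.tendsto.mono_left nhdsWithin_le_nhds
    have hmul := hslope'.mul hinv
    have heq : ∀ α : ℝ, slope N 0 α * (α - 1)⁻¹ = N α / (α * (α - 1)) := by
      intro α
      rw [slope_def_field, hN0, sub_zero, sub_zero, ← div_div, div_eq_mul_inv, div_eq_mul_inv]
    rw [show (x / y - Real.log (x / y) - 1) =
        (-(x / y - Real.log (x / y) - 1)) * ((0 : ℝ) - 1)⁻¹ by ring]
    exact hmul.congr heq
end
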